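/- Under the hypotheses: s ∈ ℤ, k ∈ ℕ⁺, g₁,…,g_k ∈ ℚ^m, finite prime sets π₀ ⊆ ⋯ ⊆ π_k with g_j ∈ Q_{π_j}^m, ⟨g_j⟩ ∩ Q_{π_{j-1}}^m ⊆ (sℤ)^m, and additionally n·g_j ∉ Q_{π_{j-1}}^m for every nonzero integer n with |n| ≤ k and every j = 1,…,k; if g ∈ Q_{π₀}^m, J is a proper subset of {1,…,k}, l ∈ ℤ with |l| ≤ k, g₀ = g − (g₁ + ⋯ + g_k), and l·g₀ ∈ ⟨{g_j : j ∈ J}⟩ + Q_{π₀}^m, then l = 0. -/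

import Mathlib

open Pointwise

/-- Rationals whose reduced denominator has all prime divisors in the finite set `π`. -/
def QpiSet (π : Finset ℕ) : Set ℚ := {q : ℚ | ∀ p : ℕ, p.Prime → p ∣ q.den → p ∈ π}

/-- The subset `Q_π^m` of `ℚ^m`. -/
def QpiVec (m : ℕ) (π : Finset ℕ) : Set (Fin m → ℚ) := {v | ∀ i, v i ∈ QpiSet π}

/-- The subset `(sℤ)^m` of `ℚ^m`. -/
def intVec (m : ℕ) (s : ℤ) : Set (Fin m → ℚ) := {v | ∀ i, ∃ z : ℤ, v i = (s : ℚ) * z}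

lemma QpiSet.zero_mem (π : Finset ℕ) : (0 : ℚ) ∈ QpiSet π := by
  intro p hp hd
  simp at hd
  exact absurd hd hp.ne_one

lemma QpiSet.add_mem {π : Finset ℕ} {a b : ℚ} (ha : a ∈ QpiSet π) (hb : b ∈ QpiSet π) :
    a + b ∈ QpiSet π := by
  intro p hp hd
  have h := hd.trans (Rat.add_den_dvd a b)
  rcases hp.dvd_mul.mp h with h' | h'
  · exact ha p hp h'
  · exact hb p hp h'

lemma QpiSet.neg_mem {π : Finset ℕ} {a : ℚ} (ha : a ∈ QpiSet π) : -a ∈ QpiSet π := by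
  intro p hp hd
  rw [Rat.den_neg_eq_den] at hd
  exact ha p hp hd

/-- `Q_π^m` as an additive subgroup of `ℚ^m`. -/
def QpiSub (m : ℕ) (π : Finset ℕ) : AddSubgroup (Fin m → ℚ) where
  carrier := QpiVec m π
  zero_mem' := fun _ => QpiSet.zero_mem π
  add_mem' := fun hu hv i => QpiSet.add_mem (hu i) (hv i)
  neg_mem' := fun hu i => QpiSet.neg_mem (hu i)

lemma mem_QpiSub {m : ℕ} {π : Finset ℕ} {v : Fin m → ℚ} :
    v ∈ QpiSub m π ↔ v ∈ QpiVec m π := Iff.rfl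

lemma QpiSet.mono {π π' : Finset ℕ} (h : π ⊆ π') {a : ℚ} (ha : a ∈ QpiSet π) :
    a ∈ QpiSet π' := fun p hp hd => h (ha p hp hd)

lemma QpiVec.mono {m : ℕ} {π π' : Finset ℕ} (h : π ⊆ π') {v : Fin m → ℚ}
    (hv : v ∈ QpiVec m π) : v ∈ QpiVec m π' := fun i => QpiSet.mono h (hv i)

lemma intVec_subset_QpiVec (m : ℕ) (s : ℤ) (π : Finset ℕ) :
    intVec m s ⊆ QpiVec m π := by
  intro v hv i p hp hd
  obtain ⟨z, hz⟩ := hv i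
  have : v i = ((s * z : ℤ) : ℚ) := by push_cast; exact hz
  rw [this, Rat.den_intCast] at hd
  exact absurd (Nat.eq_one_of_dvd_one hd) hp.ne_one

lemma QpiVec.zsmul_mem {m : ℕ} {π : Finset ℕ} {v : Fin m → ℚ} (hv : v ∈ QpiVec m π)
    (n : ℤ) : n • v ∈ QpiVec m π := (QpiSub m π).zsmul_mem hv n

lemma closure_rep {m : ℕ} (g : ℕ → Fin m → ℚ) (J : Finset ℕ) {x : Fin m → ℚ}
    (hx : x ∈ AddSubgroup.closure {x : Fin m → ℚ | ∃ j ∈ J, x = g j}) :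
    ∃ c : ℕ → ℤ, x = ∑ j ∈ J, c j • g j := by
  induction hx using AddSubgroup.closure_induction with
  | mem y hy =>
    obtain ⟨j, hj, rfl⟩ := hy
    exact ⟨fun i => if i = j then 1 else 0, by simp [ite_smul, Finset.sum_ite_eq', hj]⟩
  | zero => exact ⟨0, by simp⟩
  | add y z hy hz ihy ihz =>
    obtain ⟨cy, rfl⟩ := ihy
    obtain ⟨cz, rfl⟩ := ihz
    exact ⟨cy + cz, by simp [add_smul, Finset.sum_add_distrib]⟩
  | neg y hy ihy =>
    obtain ⟨cy, rfl⟩ := ihy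
    exact ⟨-cy, by simp⟩

/-- Lemma 5.2(B): under conditions (a_j), (b_j), (c_j), if `a ∈ Q_{π₀}^m`, `J` is a
proper subset of `{1,…,k}`, `|l| ≤ k` and
`l·g₀ ∈ ⟨{g_j : j ∈ J}⟩ + Q_{π₀}^m` where `g₀ = a − (g₁ + ⋯ + g_k)`, then `l = 0`. -/
theorem stmt_7 (m : ℕ) (s : ℤ) (k : ℕ) (hk : 0 < k)
    (g : ℕ → Fin m → ℚ) (π : ℕ → Finset ℕ)
    (hπ : ∀ j ≤ k, ∀ p ∈ π j, Nat.Prime p)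
    (hmono : ∀ j < k, π j ⊆ π (j + 1))
    (ha : ∀ j, 1 ≤ j → j ≤ k → g j ∈ QpiVec m (π j))
    (hb : ∀ j, 1 ≤ j → j ≤ k →
      (AddSubgroup.zmultiples (g j) : Set (Fin m → ℚ)) ∩ QpiVec m (π (j - 1)) ⊆ intVec m s)
    (hc : ∀ j, 1 ≤ j → j ≤ k → ∀ n : ℤ, n ≠ 0 → |n| ≤ (k : ℤ) →
      n • g j ∉ QpiVec m (π (j - 1)))
    (a : Fin m → ℚ) (haπ : a ∈ QpiVec m (π 0))
    (J : Finset ℕ) (hJ : J ⊂ Finset.Icc 1 k)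
    (l : ℤ) (hl : |l| ≤ (k : ℤ))
    (g₀ : Fin m → ℚ) (hg₀ : g₀ = a - ∑ j ∈ Finset.Icc 1 k, g j)
    (hmem : l • g₀ ∈
      (AddSubgroup.closure {x : Fin m → ℚ | ∃ j ∈ J, x = g j} : Set (Fin m → ℚ))
        + QpiVec m (π 0)) :
    l = 0 := by
  -- the chain `π i ⊆ π j` for `i ≤ j ≤ k`
  have hchain : ∀ i j : ℕ, i ≤ j → j ≤ k → π i ⊆ π j := by
    intro i j hij
    induction j, hij using Nat.le_induction with
    | base => intro _; exact Finset.Subset.refl _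
    | succ n hn ih =>
      intro hnk
      exact (ih (Nat.le_of_succ_le hnk)).trans (hmono n (Nat.lt_of_succ_le hnk))
  -- the key cancellation lemma
  have key : ∀ T : Finset ℕ, T ⊆ Finset.Icc 1 k → ∀ c : ℕ → ℤ,
      (∀ j ∈ T, j ∉ J → |c j| ≤ (k : ℤ)) →
      (∑ j ∈ T, c j • g j) ∈ QpiVec m (π 0) →
      ∀ j ∈ T, j ∉ J → c j = 0 := by
    intro T
    induction T using Finset.strongInduction with
    | _ T ih =>
      intro hT c hbound hsum
      by_cases hfil : T.filter (fun j => c j ≠ 0) = ∅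
      · intro j hj hjJ
        by_contra hne
        have hmem' : j ∈ T.filter (fun j => c j ≠ 0) := by simp [hj, hne]
        simp [hfil] at hmem'
      · have hne : (T.filter (fun j => c j ≠ 0)).Nonempty :=
          Finset.nonempty_of_ne_empty hfil
        set j' := (T.filter (fun j => c j ≠ 0)).max' hne with hj'def
        have hj'mem : j' ∈ T.filter (fun j => c j ≠ 0) := Finset.max'_mem _ hne
        have hj'T : j' ∈ T := (Finset.mem_filter.mp hj'mem).1
        have hj'ne : c j' ≠ 0 := (Finset.mem_filter.mp hj'mem).2
        have hj'Icc := hT hj'T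
        have hj'1 : 1 ≤ j' := (Finset.mem_Icc.mp hj'Icc).1
        have hj'k : j' ≤ k := (Finset.mem_Icc.mp hj'Icc).2
        have hmax : ∀ j ∈ T, c j ≠ 0 → j ≤ j' := by
          intro j hj hcj
          exact Finset.le_max' _ j (Finset.mem_filter.mpr ⟨hj, hcj⟩)
        have hj1k : j' - 1 ≤ k := le_trans (Nat.sub_le _ _) hj'k
        -- every other term lies in `Q_{π (j'-1)}^m`
        have herase : (∑ j ∈ T.erase j', c j • g j) ∈ QpiVec m (π (j' - 1)) := by
          rw [← mem_QpiSub]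
          apply AddSubgroup.sum_mem
          intro j hj
          have hjT := Finset.mem_of_mem_erase hj
          by_cases hcj : c j = 0
          · simp [hcj, AddSubgroup.zero_mem]
          · have hjle : j ≤ j' := hmax j hjT hcj
            have hjlt : j < j' := lt_of_le_of_ne hjle (Finset.ne_of_mem_erase hj)
            have hjle' : j ≤ j' - 1 := Nat.le_sub_one_of_lt hjlt
            have hj1 : 1 ≤ j := (Finset.mem_Icc.mp (hT hjT)).1
            have hjk : j ≤ k := (Finset.mem_Icc.mp (hT hjT)).2
            exact QpiVec.zsmul_mem
              (QpiVec.mono (hchain j (j' - 1) hjle' hj1k) (ha j hj1 hjk)) (c j)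
        have hsum' : (∑ j ∈ T, c j • g j) ∈ QpiVec m (π (j' - 1)) :=
          QpiVec.mono (hchain 0 (j' - 1) (Nat.zero_le _) hj1k) hsum
        have hsplit : c j' • g j' =
            (∑ j ∈ T, c j • g j) - ∑ j ∈ T.erase j', c j • g j := by
          rw [← Finset.add_sum_erase T _ hj'T]; ring
        have hj'π : c j' • g j' ∈ QpiVec m (π (j' - 1)) := by
          rw [hsplit, ← mem_QpiSub]
          exact AddSubgroup.sub_mem _ hsum' herase
        by_cases hj'J : j' ∈ J
        · -- use (b) to push the top term into `Q_{π 0}^m`, then recurse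
          have hmul : c j' • g j' ∈ (AddSubgroup.zmultiples (g j') : Set (Fin m → ℚ)) :=
            AddSubgroup.zsmul_mem_zmultiples _ _
          have hint : c j' • g j' ∈ intVec m s := hb j' hj'1 hj'k ⟨hmul, hj'π⟩
          have hπ0 : c j' • g j' ∈ QpiVec m (π 0) := intVec_subset_QpiVec m s _ hint
          have herase0 : (∑ j ∈ T.erase j', c j • g j) ∈ QpiVec m (π 0) := by
            have : (∑ j ∈ T.erase j', c j • g j) =
                (∑ j ∈ T, c j • g j) - c j' • g j' := by
              rw [← Finset.add_sum_erase T _ hj'T]; ring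
            rw [this, ← mem_QpiSub]
            exact AddSubgroup.sub_mem _ hsum hπ0
          have hih := ih (T.erase j') (Finset.erase_ssubset hj'T)
            ((Finset.erase_subset _ _).trans hT) c
            (fun j hj hjJ => hbound j (Finset.mem_of_mem_erase hj) hjJ) herase0
          intro j hj hjJ
          have hjne : j ≠ j' := fun h => hjJ (h ▸ hj'J)
          exact hih j (Finset.mem_erase.mpr ⟨hjne, hj⟩) hjJ
        · -- contradiction with (c)
          exact absurd hj'π (hc j' hj'1 hj'k (c j') hj'ne (hbound j' hj'T hj'J))
  -- decompose the membership hypothesis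
  rw [Set.mem_add] at hmem
  obtain ⟨x, hx, q, hq, hxq⟩ := hmem
  obtain ⟨c, rfl⟩ := closure_rep g J hx
  have hJsub : J ⊆ Finset.Icc 1 k := hJ.subset
  set d : ℕ → ℤ := fun j => -l - (if j ∈ J then c j else 0) with hd
  have hdsum : (∑ j ∈ Finset.Icc 1 k, d j • g j) ∈ QpiVec m (π 0) := by
    have hcJ : (∑ j ∈ Finset.Icc 1 k, (if j ∈ J then c j else 0) • g j)
        = ∑ j ∈ J, c j • g j := by
      simp only [ite_smul, zero_smul]
      rw [Finset.sum_ite_mem, Finset.inter_eq_right.mpr hJsub]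
    have heq : (∑ j ∈ Finset.Icc 1 k, d j • g j) = q - l • a := by
      have hexp : ∀ j, d j • g j = (-l) • g j - (if j ∈ J then c j else 0) • g j := by
        intro j; rw [hd]; simp [sub_smul]
      calc (∑ j ∈ Finset.Icc 1 k, d j • g j)
          = (∑ j ∈ Finset.Icc 1 k, (-l) • g j)
            - ∑ j ∈ Finset.Icc 1 k, (if j ∈ J then c j else 0) • g j := by
            rw [← Finset.sum_sub_distrib]; exact Finset.sum_congr rfl (fun j _ => hexp j)
        _ = (-l) • (∑ j ∈ Finset.Icc 1 k, g j) - ∑ j ∈ J, c j • g j := by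
            rw [Finset.smul_sum, hcJ]
        _ = q - l • a := by
            have := hxq
            rw [hg₀, smul_sub] at this
            -- this : ∑_J c j • g j + q = l • a - l • ∑ g j
            rw [neg_smul]
            linear_combination (norm := module) -this
    rw [heq, ← mem_QpiSub]
    exact AddSubgroup.sub_mem _ hq ((QpiSub m (π 0)).zsmul_mem haπ l)
  obtain ⟨j₀, hj₀Icc, hj₀J⟩ := Finset.exists_of_ssubset hJ
  have hbound : ∀ j ∈ Finset.Icc 1 k, j ∉ J → |d j| ≤ (k : ℤ) := by
    intro j _ hjJ
    simp only [hd, if_neg hjJ, sub_zero, abs_neg]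
    exact hl
  have := key (Finset.Icc 1 k) (Finset.Subset.refl _) d hbound hdsum j₀ hj₀Icc hj₀J
  simp only [hd, if_neg hj₀J, sub_zero, neg_eq_zero] at this
  exact this
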